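/- For every positive integer N, 2*∑_{k=1}^N (-1)^{k-1}/(k^5 C(2k,k)) - (5/2)*∑_{k=1}^N (-1)^{k-1} H_{k-1}(2)/(k^3 C(2k,k)) = ∑_{k=1}^N 1/k^5 + (1/2)*∑_{k=1}^N (-1)^k (N-k)! ((k-1)!)^2 H_{k-1}(2) / (k * (N+k)!). -/

import Mathlib

def H2 (n : ℕ) : ℚ := ∑ j ∈ Finset.Icc 1 n, 1 / (j : ℚ) ^ 2

def T1 (k : ℕ) : ℚ := (-1 : ℚ) ^ (k - 1) / ((k : ℚ) ^ 5 * (Nat.choose (2 * k) k : ℚ))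

def T2 (k : ℕ) : ℚ :=
  (-1 : ℚ) ^ (k - 1) * H2 (k - 1) / ((k : ℚ) ^ 3 * (Nat.choose (2 * k) k : ℚ))

def T3 (k : ℕ) : ℚ := 1 / (k : ℚ) ^ 5

def RA (N k : ℕ) : ℚ :=
  (-1 : ℚ) ^ k * ((N - k).factorial : ℚ) * (((k - 1).factorial : ℚ)) ^ 2
    * H2 (k - 1) / ((k : ℚ) * ((N + k).factorial : ℚ))

def uu (N k : ℕ) : ℚ :=
  (-1 : ℚ) ^ k * (((k - 1).factorial : ℚ)) ^ 2 * H2 (k - 1) * ((N - k).factorial : ℚ)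
    / ((N + 1 + k).factorial : ℚ)

def G (N k : ℕ) : ℚ :=
  (-1 : ℚ) ^ (k + 1) * ((N + 1 - k).factorial : ℚ) * (((k - 1).factorial : ℚ)) ^ 2
    * (H2 (k - 1) * ((N : ℚ) + 1) ^ 2 - 1)
    / (((N + k).factorial : ℚ) * ((N : ℚ) + 1) ^ 4)

lemma fact_ne (n : ℕ) : ((n.factorial : ℚ)) ≠ 0 := by
  exact_mod_cast n.factorial_ne_zero

lemma H2_succ (n : ℕ) : H2 (n + 1) = H2 n + 1 / ((n : ℚ) + 1) ^ 2 := by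
  rw [H2, H2, Finset.sum_Icc_succ_top (Nat.succ_le_succ (Nat.zero_le n))]
  push_cast
  ring

lemma H2_zero : H2 0 = 0 := by simp [H2]

set_option maxHeartbeats 1000000 in
lemma RA_step (N k : ℕ) (h1 : 1 ≤ k) (h2 : k ≤ N) :
    RA (N + 1) k = RA N k - 2 * uu N k := by
  obtain ⟨j, rfl⟩ : ∃ j, k = j + 1 := ⟨k - 1, by omega⟩
  obtain ⟨m, rfl⟩ : ∃ m, N = j + 1 + m := ⟨N - (j + 1), by omega⟩
  unfold RA uu
  rw [show j + 1 + m - (j + 1) = m from by omega,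
      show j + 1 + m + 1 - (j + 1) = m + 1 from by omega,
      show j + 1 - 1 = j from by omega,
      show j + 1 + m + 1 + (j + 1) = (j + 1 + m + (j + 1)) + 1 from by omega]
  simp only [Nat.factorial_succ]
  have hj : ((j : ℚ) + 1) ≠ 0 := by positivity
  have hf1 : ((j + 1 + m + (j + 1)).factorial : ℚ) ≠ 0 := fact_ne _
  have hx : ((j : ℚ) + 1 + (m : ℚ) + (j : ℚ) + 1 + 1) ≠ 0 := by positivity
  push_cast
  field_simp
  ring

set_option maxHeartbeats 1000000 in
lemma uu_step (N k : ℕ) (h1 : 1 ≤ k) (h2 : k ≤ N) :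
    uu N k = G N (k + 1) - G N k := by
  obtain ⟨j, rfl⟩ : ∃ j, k = j + 1 := ⟨k - 1, by omega⟩
  obtain ⟨m, rfl⟩ : ∃ m, N = j + 1 + m := ⟨N - (j + 1), by omega⟩
  unfold uu G
  rw [show j + 1 + m - (j + 1) = m from by omega,
      show j + 1 + m + 1 - (j + 1) = m + 1 from by omega,
      show j + 1 + m + 1 - (j + 1 + 1) = m from by omega,
      show j + 1 - 1 = j from by omega,
      show j + 1 + 1 - 1 = j + 1 from by omega,
      show j + 1 + m + 1 + (j + 1) = (j + 1 + m + (j + 1)) + 1 from by omega,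
      show j + 1 + m + (j + 1 + 1) = (j + 1 + m + (j + 1)) + 1 from by omega,
      H2_succ]
  simp only [Nat.factorial_succ]
  have hd1 : ((((j + 1 + m + (j + 1)) + 1) * (j + 1 + m + (j + 1)).factorial : ℕ) : ℚ) ≠ 0 :=
    Nat.cast_ne_zero.2 (by positivity)
  have hd2 : ((((j + 1 + m + (j + 1)) + 1) * (j + 1 + m + (j + 1)).factorial : ℕ) : ℚ)
      * (((j + 1 + m : ℕ) : ℚ) + 1) ^ 4 ≠ 0 := by
    apply mul_ne_zero hd1
    positivity
  have hd3 : (((j + 1 + m + (j + 1)).factorial : ℕ) : ℚ) * (((j + 1 + m : ℕ) : ℚ) + 1) ^ 4 ≠ 0 :=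
    mul_ne_zero (fact_ne _) (by positivity)
  rw [div_sub_div _ _ hd2 hd3, div_eq_div_iff hd1 (mul_ne_zero hd2 hd3)]
  have hj : ((j : ℚ) + 1) ≠ 0 := by positivity
  push_cast
  field_simp
  ring

lemma uu_sum (N : ℕ) :
    ∑ k ∈ Finset.Icc 1 N, uu N k = G N (N + 1) - G N 1 := by
  rw [← Finset.Ico_add_one_right_eq_Icc, Finset.sum_Ico_eq_sum_range]
  rw [show N + 1 - 1 = N from by omega]
  calc ∑ i ∈ Finset.range N, uu N (1 + i)
      = ∑ i ∈ Finset.range N, (G N (i + 1 + 1) - G N (i + 1)) := by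
        refine Finset.sum_congr rfl fun i hi => ?_
        rw [show 1 + i = i + 1 from by omega]
        exact uu_step N (i + 1) (by omega) (by
          simp only [Finset.mem_range] at hi; omega)
    _ = G N (N + 1) - G N (0 + 1) := Finset.sum_range_sub (fun i => G N (i + 1)) N
    _ = G N (N + 1) - G N 1 := by norm_num

lemma G_one (N : ℕ) : G N 1 = -1 / ((N : ℚ) + 1) ^ 5 := by
  unfold G
  rw [show N + 1 - 1 = N from by omega, show (1 : ℕ) - 1 = 0 from rfl, H2_zero,
      show N + 1 = N + 1 from rfl]
  rw [Nat.factorial_succ]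
  have hN1 : ((N : ℚ) + 1) ≠ 0 := by positivity
  have hf : ((N.factorial : ℚ)) ≠ 0 := fact_ne _
  push_cast
  field_simp
  ring

lemma G_top (N : ℕ) :
    G N (N + 1) = (-1 : ℚ) ^ N * ((N.factorial : ℚ)) ^ 2
      * (H2 N * ((N : ℚ) + 1) ^ 2 - 1)
      / (((2 * N + 1).factorial : ℚ) * ((N : ℚ) + 1) ^ 4) := by
  unfold G
  rw [show N + 1 - (N + 1) = 0 from by omega, show N + 1 - 1 = N from by omega,
      show N + (N + 1) = 2 * N + 1 from by omega]
  have : ((-1 : ℚ)) ^ (N + 1 + 1) = (-1 : ℚ) ^ N := by rw [pow_add]; ring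
  rw [this]
  norm_num

set_option maxHeartbeats 1000000 in
lemma key_step (N : ℕ) :
    2 * T1 (N + 1) - 5 / 2 * T2 (N + 1)
      = T3 (N + 1) + 1 / 2 * RA (N + 1) (N + 1) - (G N (N + 1) - G N 1) := by
  have hchoose : ((2 * N + 2).choose (N + 1) : ℚ) * ((N + 1).factorial : ℚ) ^ 2
      = ((2 * N + 2).factorial : ℚ) := by
    have h := Nat.choose_mul_factorial_mul_factorial (show N + 1 ≤ 2 * N + 2 by omega)
    rw [show 2 * N + 2 - (N + 1) = N + 1 from by omega] at h
    have h' : (((2 * N + 2).choose (N + 1) * (N + 1).factorial * (N + 1).factorial : ℕ) : ℚ)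
        = (((2 * N + 2).factorial : ℕ) : ℚ) := by exact_mod_cast h
    push_cast at h'
    linarith [h']
  have hcne : ((2 * N + 2).choose (N + 1) : ℚ) ≠ 0 := by
    have : 0 < (2 * N + 2).choose (N + 1) := Nat.choose_pos (by omega)
    exact_mod_cast this.ne'
  unfold T1 T2 T3 RA
  rw [G_top, G_one,
      show N + 1 - 1 = N from by omega, show N + 1 - (N + 1) = 0 from by omega,
      show 2 * (N + 1) = 2 * N + 2 from by ring,
      show N + 1 + (N + 1) = (2 * N + 1) + 1 from by omega]
  rw [show (2 * N + 2) = (2 * N + 1) + 1 from by omega] at hchoose hcne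
  rw [Nat.factorial_succ (2 * N + 1), Nat.factorial_succ N] at *
  have hN1 : ((N : ℚ) + 1) ≠ 0 := by positivity
  have hf1 : ((N.factorial : ℚ)) ≠ 0 := fact_ne _
  have hf2 : (((2 * N + 1).factorial : ℚ)) ≠ 0 := fact_ne _
  push_cast at hchoose ⊢
  have hch : (((2 * N + 1) + 1).choose (N + 1) : ℚ)
      = (2 * (N : ℚ) + 1 + 1) * ((2 * N + 1).factorial : ℚ)
        / ((((N : ℚ) + 1) * (N.factorial : ℚ)) ^ 2) := by
    rw [eq_div_iff (by positivity)]
    linarith [hchoose]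
  rw [hch]
  field_simp
  ring

theorem main' (N : ℕ) (hN : 1 ≤ N) :
    2 * ∑ k ∈ Finset.Icc 1 N, T1 k - 5 / 2 * ∑ k ∈ Finset.Icc 1 N, T2 k
      = ∑ k ∈ Finset.Icc 1 N, T3 k + 1 / 2 * ∑ k ∈ Finset.Icc 1 N, RA N k := by
  induction N, hN using Nat.le_induction with
  | base =>
      norm_num [T1, T2, T3, RA, H2_zero, Nat.choose]
  | succ N hN ih =>
      have hsplit : ∀ f : ℕ → ℚ, ∑ k ∈ Finset.Icc 1 (N + 1), f k
          = ∑ k ∈ Finset.Icc 1 N, f k + f (N + 1) := fun f =>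
        Finset.sum_Icc_succ_top (by omega) f
      rw [hsplit T1, hsplit T2, hsplit T3, hsplit (RA (N + 1))]
      have hRA : ∑ k ∈ Finset.Icc 1 N, RA (N + 1) k
          = ∑ k ∈ Finset.Icc 1 N, RA N k - 2 * (G N (N + 1) - G N 1) := by
        rw [← uu_sum, Finset.mul_sum, ← Finset.sum_sub_distrib]
        refine Finset.sum_congr rfl fun k hk => ?_
        simp only [Finset.mem_Icc] at hk
        exact RA_step N k hk.1 hk.2
      rw [hRA]
      have hkey := key_step N
      linarith [hkey, ih]

theorem stmt_16 (N : ℕ) (hN : 1 ≤ N) :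
    2 * ∑ k ∈ Finset.Icc 1 N, (-1 : ℚ) ^ (k - 1) / ((k : ℚ) ^ 5 * (Nat.choose (2 * k) k : ℚ))
      - 5 / 2 * ∑ k ∈ Finset.Icc 1 N,
          (-1 : ℚ) ^ (k - 1) * H2 (k - 1) / ((k : ℚ) ^ 3 * (Nat.choose (2 * k) k : ℚ))
      = ∑ k ∈ Finset.Icc 1 N, 1 / (k : ℚ) ^ 5
        + 1 / 2 * ∑ k ∈ Finset.Icc 1 N,
            (-1 : ℚ) ^ k * ((N - k).factorial : ℚ) * (((k - 1).factorial : ℚ)) ^ 2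
              * H2 (k - 1) / ((k : ℚ) * ((N + k).factorial : ℚ)) := by
  exact main' N hN
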